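/- Let γ ∈ [0,1] and α ≥ 0, and define for x, y ∈ Ω with x ≠ y the kernel F₁(x,y) := |x−y|^{2−N} · min{ 1/d(y), d(x)/|x−y|² } · min{ d(x), |x−y| }^{−γ} · d_Σ(x)^{α}. Then there exists a constant C > 0, depending only on N, α, γ and diam(Ω), such that for every y ∈ Ω and every λ > 0, ∫_{{x ∈ Ω \ {y} : F₁(x,y) > λ}} d(x) d_Σ(x)^{−α} dx ≤ C λ^{−(N+1)/(N+γ−1)}. -/

import Mathlib

open MeasureTheory Set Metric

private lemma core_bound {r dx dy t Nr γ : ℝ} (hγ1 : γ ≤ 1)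
    (ht0 : 0 ≤ t) (ht1 : t ≤ 1)
    (hr : 0 < r) (hdx : 0 < dx) (hdyx : dx - r ≤ dy) :
    dx ^ t * (r ^ (2 - Nr) * min dy⁻¹ (dx / r ^ (2:ℝ)) * (min dx r) ^ (-γ)) ≤
      4 * r ^ (t + 1 - Nr - γ) := by
  have hdiv : dx / r ^ (2:ℝ) = dx * r ^ (-2:ℝ) := by
    rw [Real.rpow_neg hr.le, div_eq_mul_inv]
  rcases le_or_gt dx r with h1 | h1
  · -- dx ≤ r
    have hmin : min dx r = dx := min_eq_left h1
    calc dx ^ t * (r ^ (2 - Nr) * min dy⁻¹ (dx / r ^ (2:ℝ)) * (min dx r) ^ (-γ))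
        ≤ dx ^ t * (r ^ (2 - Nr) * (dx * r ^ (-2:ℝ)) * dx ^ (-γ)) := by
          rw [hmin, ← hdiv]
          gcongr dx ^ t * (r ^ (2 - Nr) * ?_ * dx ^ (-γ))
          exact min_le_right _ _
      _ = dx ^ (t + 1 + -γ) * (r ^ (2 - Nr) * r ^ (-2:ℝ)) := by
          rw [Real.rpow_add hdx, Real.rpow_add hdx, Real.rpow_one]; ring
      _ = dx ^ (t + 1 - γ) * r ^ (-Nr) := by
          rw [← Real.rpow_add hr]; ring_nf
      _ ≤ r ^ (t + 1 - γ) * r ^ (-Nr) :=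
          mul_le_mul_of_nonneg_right (Real.rpow_le_rpow hdx.le h1 (by linarith))
            (by positivity)
      _ = r ^ (t + 1 - Nr - γ) := by rw [← Real.rpow_add hr]; ring_nf
      _ ≤ 4 * r ^ (t + 1 - Nr - γ) := by nlinarith [Real.rpow_pos_of_pos hr (t + 1 - Nr - γ)]
  · have hmin : min dx r = r := min_eq_right h1.le
    rcases le_or_gt dx (2 * r) with h2 | h2
    · -- r < dx ≤ 2r
      calc dx ^ t * (r ^ (2 - Nr) * min dy⁻¹ (dx / r ^ (2:ℝ)) * (min dx r) ^ (-γ))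
          ≤ dx ^ t * (r ^ (2 - Nr) * (dx * r ^ (-2:ℝ)) * r ^ (-γ)) := by
            rw [hmin, ← hdiv]
            gcongr dx ^ t * (r ^ (2 - Nr) * ?_ * r ^ (-γ))
            exact min_le_right _ _
        _ = dx ^ (t + 1) * (r ^ (2 - Nr) * r ^ (-2:ℝ) * r ^ (-γ)) := by
            rw [Real.rpow_add hdx, Real.rpow_one]; ring
        _ = dx ^ (t + 1) * r ^ (-Nr - γ) := by
            rw [← Real.rpow_add hr, ← Real.rpow_add hr]; ring_nf
        _ ≤ (2 * r) ^ (t + 1) * r ^ (-Nr - γ) := by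
            exact mul_le_mul_of_nonneg_right
              (Real.rpow_le_rpow hdx.le h2 (by positivity)) (by positivity)
        _ = 2 ^ (t + 1) * (r ^ (t + 1) * r ^ (-Nr - γ)) := by
            rw [Real.mul_rpow (by norm_num) hr.le]; ring
        _ ≤ 4 * (r ^ (t + 1) * r ^ (-Nr - γ)) := by
            have h24 : (2:ℝ) ^ (t + 1) ≤ 2 ^ (2:ℝ) :=
              Real.rpow_le_rpow_of_exponent_le one_le_two (by linarith)
            have h22 : (2:ℝ) ^ (2:ℝ) = 4 := by
              rw [show (2:ℝ) = ((2:ℕ):ℝ) by norm_num, Real.rpow_natCast]; norm_num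
            have hpos : 0 < r ^ (t + 1) * r ^ (-Nr - γ) := by positivity
            nlinarith
        _ = 4 * r ^ (t + 1 - Nr - γ) := by rw [← Real.rpow_add hr]; ring_nf
    · -- 2r < dx
      have hdy2 : dx / 2 ≤ dy := by linarith
      have hinv : dy⁻¹ ≤ 2 * dx⁻¹ := by
        rw [show (2:ℝ) * dx⁻¹ = (dx / 2)⁻¹ by field_simp]
        exact inv_anti₀ (by linarith) hdy2
      calc dx ^ t * (r ^ (2 - Nr) * min dy⁻¹ (dx / r ^ (2:ℝ)) * (min dx r) ^ (-γ))
          ≤ dx ^ t * (r ^ (2 - Nr) * (2 * dx⁻¹) * r ^ (-γ)) := by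
            rw [hmin]
            gcongr dx ^ t * (r ^ (2 - Nr) * ?_ * r ^ (-γ))
            exact le_trans (min_le_left _ _) hinv
        _ = 2 * (dx ^ t * dx⁻¹) * (r ^ (2 - Nr) * r ^ (-γ)) := by ring
        _ = 2 * dx ^ (t - 1) * r ^ (2 - Nr - γ) := by
            rw [show dx⁻¹ = dx ^ (-1:ℝ) by rw [Real.rpow_neg_one],
              ← Real.rpow_add hdx, ← Real.rpow_add hr]; ring_nf
        _ ≤ 2 * r ^ (t - 1) * r ^ (2 - Nr - γ) := by
            gcongr 2 * ?_ * _
            exact Real.rpow_le_rpow_of_nonpos hr (by linarith) (by linarith)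
        _ = 2 * r ^ (t + 1 - Nr - γ) := by
            rw [mul_assoc, ← Real.rpow_add hr]; ring_nf
        _ ≤ 4 * r ^ (t + 1 - Nr - γ) := by nlinarith [Real.rpow_pos_of_pos hr (t + 1 - Nr - γ)]

/-- Collapsing the annulus term into a geometric series term. -/
private lemma annulus_term {ρ l γ : ℝ} (Nn : ℕ) (hρ : 0 < ρ) (hl : 0 < l) (k : ℕ) :
    4 * l⁻¹ * (ρ / 2 ^ (k+1)) ^ ((2:ℝ) - Nn - γ) * (ρ / 2 ^ k) ^ Nn
      = 4 * l⁻¹ * ρ ^ ((2:ℝ) - γ) * 2 ^ ((Nn:ℝ) + γ - 2) * ((2:ℝ) ^ (γ - (2:ℝ))) ^ k := by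
  have h2k : (0:ℝ) < 2 ^ k := by positivity
  have hw : (0:ℝ) < ρ / 2 ^ k := by positivity
  have e1 : (ρ / 2 ^ (k+1) : ℝ) = (ρ / 2 ^ k) / 2 := by
    rw [pow_succ]; ring
  have e2 : ((ρ / 2 ^ k) / 2) ^ ((2:ℝ) - Nn - γ)
      = (ρ / 2 ^ k) ^ ((2:ℝ) - Nn - γ) * 2 ^ ((Nn:ℝ) + γ - 2) := by
    rw [Real.div_rpow hw.le (by norm_num), div_eq_mul_inv, ← Real.rpow_neg (by norm_num)]
    ring_nf
  have e3 : (ρ / 2 ^ k : ℝ) ^ ((2:ℝ) - Nn - γ) * (ρ / 2 ^ k) ^ Nn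
      = (ρ / 2 ^ k) ^ ((2:ℝ) - γ) := by
    rw [← Real.rpow_natCast (ρ / 2 ^ k) Nn, ← Real.rpow_add hw]
    ring_nf
  have e4 : (ρ / 2 ^ k : ℝ) ^ ((2:ℝ) - γ)
      = ρ ^ ((2:ℝ) - γ) * ((2:ℝ) ^ (γ - (2:ℝ))) ^ k := by
    rw [Real.div_rpow hρ.le h2k.le, div_eq_mul_inv, ← Real.rpow_neg h2k.le,
      ← Real.rpow_natCast (2:ℝ) k, ← Real.rpow_mul (by norm_num : (0:ℝ) ≤ 2),
      ← Real.rpow_natCast ((2:ℝ) ^ (γ - (2:ℝ))) k,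
      ← Real.rpow_mul (by norm_num : (0:ℝ) ≤ 2)]
    ring_nf
  calc 4 * l⁻¹ * (ρ / 2 ^ (k+1)) ^ ((2:ℝ) - Nn - γ) * (ρ / 2 ^ k) ^ Nn
      = 4 * l⁻¹ * ((ρ / 2 ^ k) ^ ((2:ℝ) - Nn - γ) * (ρ / 2 ^ k) ^ Nn) * 2 ^ ((Nn:ℝ) + γ - 2) := by
        rw [e1, e2]; ring
    _ = 4 * l⁻¹ * (ρ ^ ((2:ℝ) - γ) * ((2:ℝ) ^ (γ - (2:ℝ))) ^ k) * 2 ^ ((Nn:ℝ) + γ - 2) := by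
        rw [e3, e4]
    _ = 4 * l⁻¹ * ρ ^ ((2:ℝ) - γ) * 2 ^ ((Nn:ℝ) + γ - 2) * ((2:ℝ) ^ (γ - (2:ℝ))) ^ k := by
        ring

/-- Level-set estimate for the kernel
`F₁(x,y) = |x−y|^{2−N} · min{1/d(y), d(x)/|x−y|²} · min{d(x), |x−y|}^{−γ} · d_Σ(x)^{α}`. -/
theorem stmt_2 {N : ℕ} (hN : 3 ≤ N) (Ω S : Set (EuclideanSpace ℝ (Fin N)))
    (hΩo : IsOpen Ω) (hΩb : Bornology.IsBounded Ω)
    (hS : S ⊆ frontier Ω) (hSne : S.Nonempty) (hSc : IsCompact S)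
    (γ α : ℝ) (hγ0 : 0 ≤ γ) (hγ1 : γ ≤ 1) (hα : 0 ≤ α) :
    ∃ C > 0, ∀ y ∈ Ω, ∀ l : ℝ, 0 < l →
      ∫⁻ x in {x ∈ Ω | x ≠ y ∧
          l < dist x y ^ ((2 : ℝ) - N) *
              min (infDist y (frontier Ω))⁻¹ (infDist x (frontier Ω) / dist x y ^ (2 : ℝ)) *
              (min (infDist x (frontier Ω)) (dist x y)) ^ (-γ) *
              infDist x S ^ α},
        ENNReal.ofReal (infDist x (frontier Ω) * infDist x S ^ (-α)) ≤
      ENNReal.ofReal (C * l ^ (-(((N : ℝ) + 1) / ((N : ℝ) + γ - 1)))) := by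
  classical
  have hN3 : (3:ℝ) ≤ (N:ℝ) := by exact_mod_cast hN
  have hFinNe : Nonempty (Fin N) := ⟨⟨0, by omega⟩⟩
  set D := max (Metric.diam Ω) 1 with hDdef
  have hD1 : (1:ℝ) ≤ D := le_max_right _ _
  have hD0 : (0:ℝ) < D := lt_of_lt_of_le one_pos hD1
  set p := (N:ℝ) + γ - 1 with hpdef
  have hp : (0:ℝ) < p := by rw [hpdef]; linarith
  set V := volume (Metric.ball (0 : EuclideanSpace ℝ (Fin N)) 1) with hVdef
  have hVt : 0 < V.toReal :=
    ENNReal.toReal_pos (measure_ball_pos _ _ one_pos).ne' measure_ball_lt_top.ne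
  refine ⟨8 * 2 ^ ((N:ℝ) + γ - 2) * (4 * D ^ α) ^ ((2 - γ)/p) * V.toReal, by positivity, ?_⟩
  intro y hy l hl
  -- basic geometric facts
  have hfrne : (frontier Ω).Nonempty := by
    rw [nonempty_frontier_iff]
    refine ⟨⟨y, hy⟩, fun h => ?_⟩
    rw [h] at hΩb
    exact NormedSpace.unbounded_univ ℝ (EuclideanSpace ℝ (Fin N)) hΩb
  have hnotmem : ∀ x ∈ Ω, x ∉ frontier Ω := fun x hx hmem => by
    rw [hΩo.frontier_eq] at hmem; exact hmem.2 hx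
  have hdy : 0 < infDist y (frontier Ω) :=
    (isClosed_frontier.notMem_iff_infDist_pos hfrne).1 (hnotmem y hy)
  set ρ := (4 * D ^ α / l) ^ (p⁻¹) with hρdef
  have hρ : 0 < ρ := Real.rpow_pos_of_pos (by positivity) _
  set Es := {x : EuclideanSpace ℝ (Fin N) | x ∈ Ω ∧ x ≠ y ∧
      l < dist x y ^ ((2 : ℝ) - N) *
          min (infDist y (frontier Ω))⁻¹ (infDist x (frontier Ω) / dist x y ^ (2 : ℝ)) *
          (min (infDist x (frontier Ω)) (dist x y)) ^ (-γ) *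
          infDist x S ^ α} with hEsdef
  -- the two pointwise estimates on the level set
  have key : ∀ x ∈ Es, dist x y < ρ ∧
      infDist x (frontier Ω) * infDist x S ^ (-α) ≤
        4 * l⁻¹ * dist x y ^ ((2:ℝ) - N - γ) := by
    rintro x ⟨hxΩ, hxy, hK⟩
    have hr : 0 < dist x y := dist_pos.2 hxy
    have hdx : 0 < infDist x (frontier Ω) :=
      (isClosed_frontier.notMem_iff_infDist_pos hfrne).1 (hnotmem x hxΩ)
    have hdyx : infDist x (frontier Ω) - dist x y ≤ infDist y (frontier Ω) := by
      have := infDist_le_infDist_add_dist (x := x) (y := y) (s := frontier Ω)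
      linarith
    have hdS : 0 < infDist x S :=
      (hSc.isClosed.notMem_iff_infDist_pos hSne).1
        (fun hmem => hnotmem x hxΩ (hS hmem))
    have hrD : dist x y ≤ D :=
      le_trans (Metric.dist_le_diam_of_mem hΩb hxΩ hy) (le_max_left _ _)
    have hdSD : infDist x S ≤ D := by
      obtain ⟨z, hz⟩ := hSne
      calc infDist x S ≤ dist x z := infDist_le_dist_of_mem hz
        _ ≤ Metric.diam (closure Ω) :=
            Metric.dist_le_diam_of_mem hΩb.closure (subset_closure hxΩ)
              (frontier_subset_closure (hS hz))
        _ = Metric.diam Ω := Metric.diam_closure _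
        _ ≤ D := le_max_left _ _
    set A := dist x y ^ ((2 : ℝ) - N) *
        min (infDist y (frontier Ω))⁻¹ (infDist x (frontier Ω) / dist x y ^ (2 : ℝ)) *
        (min (infDist x (frontier Ω)) (dist x y)) ^ (-γ) with hAdef
    have hA0 : A ≤ 4 * dist x y ^ (1 - (N:ℝ) - γ) := by
      have := core_bound (Nr := (N:ℝ)) (dy := infDist y (frontier Ω)) (t := 0)
        hγ1 le_rfl zero_le_one hr hdx hdyx
      simpa [Real.rpow_zero, hAdef] using this
    have hA1 : infDist x (frontier Ω) * A ≤ 4 * dist x y ^ ((2:ℝ) - N - γ) := by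
      have := core_bound (Nr := (N:ℝ)) (dy := infDist y (frontier Ω)) (t := 1)
        hγ1 zero_le_one le_rfl hr hdx hdyx
      rw [Real.rpow_one] at this
      calc infDist x (frontier Ω) * A ≤ 4 * dist x y ^ (1 + 1 - (N:ℝ) - γ) := this
        _ = 4 * dist x y ^ ((2:ℝ) - N - γ) := by norm_num
    constructor
    · -- dist x y < ρ
      have h1 : l < 4 * dist x y ^ (1 - (N:ℝ) - γ) * D ^ α := by
        calc l < A * infDist x S ^ α := hK
          _ ≤ (4 * dist x y ^ (1 - (N:ℝ) - γ)) * D ^ α := by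
              apply mul_le_mul hA0 (Real.rpow_le_rpow hdS.le hdSD hα) (by positivity)
              positivity
      have hexp : dist x y ^ (1 - (N:ℝ) - γ) = (dist x y ^ p)⁻¹ := by
        rw [← Real.rpow_neg hr.le, hpdef]; ring_nf
      have h2 : dist x y ^ p < 4 * D ^ α / l := by
        rw [lt_div_iff₀ hl]
        have hrp : 0 < dist x y ^ p := Real.rpow_pos_of_pos hr _
        rw [hexp] at h1
        calc dist x y ^ p * l < dist x y ^ p * (4 * (dist x y ^ p)⁻¹ * D ^ α) :=
              mul_lt_mul_of_pos_left h1 hrp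
          _ = 4 * D ^ α := by field_simp
      have := Real.rpow_lt_rpow (by positivity) h2 (by positivity : (0:ℝ) < p⁻¹)
      rwa [Real.rpow_rpow_inv hr.le hp.ne'] at this
    · -- pointwise bound for the integrand
      have hApos : 0 < A := by
        rw [hAdef]
        apply mul_pos (mul_pos (Real.rpow_pos_of_pos hr _) _) (Real.rpow_pos_of_pos _ _)
        · exact lt_min (inv_pos.2 hdy) (div_pos hdx (Real.rpow_pos_of_pos hr _))
        · exact lt_min hdx hr
      have h2 : l * infDist x S ^ (-α) < A := by
        rw [Real.rpow_neg hdS.le, mul_inv_lt_iff₀ (Real.rpow_pos_of_pos hdS α)]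
        exact hK
      have h4 : infDist x S ^ (-α) < l⁻¹ * A := by
        have := mul_lt_mul_of_pos_left h2 (inv_pos.2 hl)
        rwa [← mul_assoc, inv_mul_cancel₀ hl.ne', one_mul] at this
      have h3 : infDist x (frontier Ω) * infDist x S ^ (-α) ≤
          infDist x (frontier Ω) * A / l := by
        rw [div_eq_mul_inv, mul_assoc, mul_comm A l⁻¹]
        exact mul_le_mul_of_nonneg_left h4.le hdx.le
      calc infDist x (frontier Ω) * infDist x S ^ (-α)
          ≤ infDist x (frontier Ω) * A / l := h3
        _ ≤ 4 * dist x y ^ ((2:ℝ) - N - γ) / l := by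
            rw [div_eq_mul_inv, div_eq_mul_inv]
            exact mul_le_mul_of_nonneg_right hA1 (by positivity)
        _ = 4 * l⁻¹ * dist x y ^ ((2:ℝ) - N - γ) := by ring
  -- measurability of the level set
  have hEmeas : MeasurableSet Es := by
    have hdist : Measurable fun x : EuclideanSpace ℝ (Fin N) => dist x y :=
      (continuous_id.dist continuous_const).measurable
    have hinfF : Measurable fun x : EuclideanSpace ℝ (Fin N) => infDist x (frontier Ω) :=
      (continuous_infDist_pt _).measurable
    have hinfS : Measurable fun x : EuclideanSpace ℝ (Fin N) => infDist x S :=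
      (continuous_infDist_pt _).measurable
    have hk : Measurable fun x : EuclideanSpace ℝ (Fin N) =>
        dist x y ^ ((2 : ℝ) - N) *
          min (infDist y (frontier Ω))⁻¹ (infDist x (frontier Ω) / dist x y ^ (2 : ℝ)) *
          (min (infDist x (frontier Ω)) (dist x y)) ^ (-γ) *
          infDist x S ^ α :=
      (((hdist.pow_const _).mul
        (measurable_const.min (hinfF.div (hdist.pow_const _)))).mul
        ((hinfF.min hdist).pow_const _)).mul (hinfS.pow_const _)
    have : Es = Ω ∩ ({y}ᶜ ∩ {x | l < dist x y ^ ((2 : ℝ) - N) *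
        min (infDist y (frontier Ω))⁻¹ (infDist x (frontier Ω) / dist x y ^ (2 : ℝ)) *
        (min (infDist x (frontier Ω)) (dist x y)) ^ (-γ) *
        infDist x S ^ α}) := by
      ext x
      simp only [hEsdef, mem_setOf_eq, mem_inter_iff, mem_compl_iff, mem_singleton_iff]
    rw [this]
    exact hΩo.measurableSet.inter ((measurableSet_singleton y).compl.inter
      (measurableSet_lt measurable_const hk))
  -- the annuli
  set Ak : ℕ → Set (EuclideanSpace ℝ (Fin N)) :=
    fun k => Metric.closedBall y (ρ / 2 ^ k) \ Metric.ball y (ρ / 2 ^ (k+1)) with hAkdef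
  have hsub : Es ⊆ ⋃ k : ℕ, Ak k := by
    intro x hx
    have hr : 0 < dist x y := dist_pos.2 hx.2.1
    have hrρ : dist x y < ρ := (key x hx).1
    have hex : ∃ n : ℕ, ρ / 2 ^ (n+1) ≤ dist x y := by
      obtain ⟨n, hn⟩ := pow_unbounded_of_one_lt (ρ / dist x y) one_lt_two
      refine ⟨n, ?_⟩
      have h2n : (2:ℝ) ^ n ≤ 2 ^ (n+1) := pow_le_pow_right₀ one_le_two (Nat.le_succ n)
      rw [div_le_iff₀ (by positivity)]
      rw [div_lt_iff₀ hr] at hn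
      nlinarith [hr]
    refine mem_iUnion.2 ⟨Nat.find hex, ?_⟩
    have hk1 : ρ / 2 ^ (Nat.find hex + 1) ≤ dist x y := Nat.find_spec hex
    have hk2 : dist x y ≤ ρ / 2 ^ (Nat.find hex) := by
      rcases Nat.eq_zero_or_pos (Nat.find hex) with h0 | h0
      · rw [h0]; simpa using hrρ.le
      · have := Nat.find_min hex (m := Nat.find hex - 1) (Nat.sub_lt h0 one_pos)
        push_neg at this
        have : dist x y < ρ / 2 ^ (Nat.find hex - 1 + 1) := this
        calc dist x y ≤ ρ / 2 ^ (Nat.find hex - 1 + 1) := this.le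
          _ = ρ / 2 ^ (Nat.find hex) := by rw [Nat.sub_add_cancel h0]
    exact ⟨Metric.mem_closedBall.2 hk2, fun hmem => absurd (Metric.mem_ball.1 hmem) (not_lt.2 hk1)⟩
  -- geometric series data
  set q : ENNReal := ENNReal.ofReal ((2:ℝ) ^ (γ - (2:ℝ))) with hqdef
  set c : ENNReal := ENNReal.ofReal (4 * l⁻¹ * ρ ^ ((2:ℝ) - γ) * 2 ^ ((N:ℝ) + γ - 2)) * V
    with hcdef
  have hterm : ∀ k : ℕ, (∫⁻ x in Ak k,
      ENNReal.ofReal (4 * l⁻¹ * dist x y ^ ((2:ℝ) - N - γ))) ≤ c * q ^ k := by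
    intro k
    have hAkm : MeasurableSet (Ak k) := measurableSet_closedBall.diff measurableSet_ball
    have hrad : (0:ℝ) < ρ / 2 ^ (k+1) := by positivity
    have step1 : (∫⁻ x in Ak k, ENNReal.ofReal (4 * l⁻¹ * dist x y ^ ((2:ℝ) - N - γ))) ≤
        ENNReal.ofReal (4 * l⁻¹ * (ρ / 2 ^ (k+1)) ^ ((2:ℝ) - N - γ)) * volume (Ak k) := by
      rw [← setLIntegral_const]
      apply setLIntegral_mono' hAkm
      intro x hx
      apply ENNReal.ofReal_le_ofReal
      apply mul_le_mul_of_nonneg_left _ (by positivity)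
      exact Real.rpow_le_rpow_of_nonpos hrad (not_lt.1 (fun h => hx.2 (Metric.mem_ball.2 h)))
        (by linarith)
    have step2 : volume (Ak k) ≤ ENNReal.ofReal ((ρ / 2 ^ k) ^ N) * V := by
      calc volume (Ak k) ≤ volume (Metric.closedBall y (ρ / 2 ^ k)) :=
            measure_mono diff_subset
        _ = ENNReal.ofReal ((ρ / 2 ^ k) ^ Module.finrank ℝ (EuclideanSpace ℝ (Fin N))) * V :=
            Measure.addHaar_closedBall _ _ (by positivity)
        _ = ENNReal.ofReal ((ρ / 2 ^ k) ^ N) * V := by rw [finrank_euclideanSpace_fin]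
    calc (∫⁻ x in Ak k, ENNReal.ofReal (4 * l⁻¹ * dist x y ^ ((2:ℝ) - N - γ)))
        ≤ ENNReal.ofReal (4 * l⁻¹ * (ρ / 2 ^ (k+1)) ^ ((2:ℝ) - N - γ)) *
            (ENNReal.ofReal ((ρ / 2 ^ k) ^ N) * V) := by
          refine le_trans step1 ?_
          exact mul_le_mul_right step2 _
      _ = ENNReal.ofReal (4 * l⁻¹ * (ρ / 2 ^ (k+1)) ^ ((2:ℝ) - N - γ) * (ρ / 2 ^ k) ^ N) * V := by
          rw [← mul_assoc, ← ENNReal.ofReal_mul (by positivity)]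
      _ = c * q ^ k := by
          rw [annulus_term N hρ hl k, hcdef, hqdef, ENNReal.ofReal_mul (by positivity),
            ENNReal.ofReal_pow (by positivity)]
          ring
  have hq2 : (1 - q)⁻¹ ≤ 2 := by
    have hqle : q ≤ ENNReal.ofReal ((2:ℝ)⁻¹) := by
      apply ENNReal.ofReal_le_ofReal
      rw [show (2:ℝ)⁻¹ = (2:ℝ) ^ (-1:ℝ) by rw [Real.rpow_neg_one]]
      exact Real.rpow_le_rpow_of_exponent_le one_le_two (by linarith)
    have h12 : ENNReal.ofReal ((2:ℝ)⁻¹) = 2⁻¹ := by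
      rw [ENNReal.ofReal_inv_of_pos two_pos, ENNReal.ofReal_ofNat]
    rw [h12] at hqle
    have hhalf : (1:ENNReal) - 2⁻¹ = 2⁻¹ := by
      rw [← ENNReal.inv_two_add_inv_two, ENNReal.add_sub_cancel_right (by simp)]
    have : (2:ENNReal)⁻¹ ≤ 1 - q := hhalf ▸ tsub_le_tsub_left hqle 1
    calc (1 - q)⁻¹ ≤ (2⁻¹ : ENNReal)⁻¹ := ENNReal.inv_le_inv.2 this
      _ = 2 := by simp
  -- putting everything together
  calc ∫⁻ x in Es, ENNReal.ofReal (infDist x (frontier Ω) * infDist x S ^ (-α))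
      ≤ ∫⁻ x in Es, ENNReal.ofReal (4 * l⁻¹ * dist x y ^ ((2:ℝ) - N - γ)) := by
        apply setLIntegral_mono' hEmeas
        intro x hx
        exact ENNReal.ofReal_le_ofReal (key x hx).2
    _ ≤ ∫⁻ x in ⋃ k : ℕ, Ak k, ENNReal.ofReal (4 * l⁻¹ * dist x y ^ ((2:ℝ) - N - γ)) :=
        lintegral_mono_set hsub
    _ ≤ ∑' k : ℕ, ∫⁻ x in Ak k, ENNReal.ofReal (4 * l⁻¹ * dist x y ^ ((2:ℝ) - N - γ)) :=
        lintegral_iUnion_le _ _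
    _ ≤ ∑' k : ℕ, c * q ^ k := ENNReal.tsum_le_tsum hterm
    _ = c * (1 - q)⁻¹ := by rw [ENNReal.tsum_mul_left, ENNReal.tsum_geometric]
    _ ≤ c * 2 := mul_le_mul_right hq2 _
    _ ≤ ENNReal.ofReal (8 * 2 ^ ((N:ℝ) + γ - 2) * (4 * D ^ α) ^ ((2 - γ)/p) * V.toReal *
          l ^ (-(((N : ℝ) + 1) / ((N : ℝ) + γ - 1)))) := by
        have hVeq : V = ENNReal.ofReal V.toReal :=
          (ENNReal.ofReal_toReal measure_ball_lt_top.ne).symm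
        have h2e : (2:ENNReal) = ENNReal.ofReal (2:ℝ) := by
          rw [ENNReal.ofReal_ofNat]
        rw [hcdef]
        conv_lhs => rw [hVeq, h2e]
        rw [← ENNReal.ofReal_mul (by positivity), ← ENNReal.ofReal_mul (by positivity)]
        apply ENNReal.ofReal_le_ofReal
        apply le_of_eq
        -- real computation
        have hρeq : ρ ^ ((2:ℝ) - γ) = (4 * D ^ α) ^ ((2 - γ)/p) * l ^ (-((2 - γ)/p)) := by
          rw [hρdef, ← Real.rpow_mul (by positivity),
            show p⁻¹ * ((2:ℝ) - γ) = (2 - γ)/p by rw [inv_mul_eq_div],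
            Real.div_rpow (by positivity) hl.le, div_eq_mul_inv, ← Real.rpow_neg hl.le]
        have hlexp : l⁻¹ * l ^ (-((2 - γ)/p)) = l ^ (-(((N : ℝ) + 1) / p)) := by
          rw [show l⁻¹ = l ^ (-1:ℝ) by rw [Real.rpow_neg_one], ← Real.rpow_add hl]
          congr 1
          rw [hpdef]
          have hp' : (N:ℝ) + γ - 1 ≠ 0 := by linarith
          field_simp
          ring
        calc 4 * l⁻¹ * ρ ^ ((2:ℝ) - γ) * 2 ^ ((N:ℝ) + γ - 2) * V.toReal * 2
            = 8 * 2 ^ ((N:ℝ) + γ - 2) * (4 * D ^ α) ^ ((2 - γ)/p) * V.toReal *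
                (l⁻¹ * l ^ (-((2 - γ)/p))) := by
              rw [hρeq]; ring
          _ = 8 * 2 ^ ((N:ℝ) + γ - 2) * (4 * D ^ α) ^ ((2 - γ)/p) * V.toReal *
                l ^ (-(((N : ℝ) + 1) / ((N : ℝ) + γ - 1))) := by
              rw [hlexp, hpdef]
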